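/- For independent exponential random variables X_1,...,X_n with rates w_1,...,w_n > 0, the ranking probability P[X_1 < X_2 < ... < X_n] equals ∏_{k=1}^n w_k/(w_k + w_{k+1} + ... + w_n). -/

import Mathlib

open MeasureTheory ProbabilityTheory

open Real Set in
private lemma aux_integral_exp {b : ℝ} (hb : 0 < b) (t : ℝ) :
    ∫ x in Set.Ioi t, Real.exp (-(b * x)) = Real.exp (-(b * t)) / b := by
  have h := integral_Ioi_of_hasDerivAt_of_tendsto
    (f := fun x => -Real.exp (-(b * x)) / b) (f' := fun x => Real.exp (-(b * x))) (a := t) (m := 0)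
    ?_ ?_ ?_ ?_
  · rw [h]; ring
  · exact (Continuous.continuousWithinAt (by continuity))
  · intro x _
    have : HasDerivAt (fun a => -Real.exp (-(b * a))) (b * Real.exp (-(b * x))) x :=
      hasDerivAt_neg_exp_mul_exp
    have := this.div_const b
    simpa [mul_comm, mul_div_assoc, mul_div_cancel_left₀ _ hb.ne'] using this
  · simpa [neg_mul] using exp_neg_integrableOn_Ioi t hb
  · have h1 : Filter.Tendsto (fun x : ℝ => -(b * x)) Filter.atTop Filter.atBot :=
      Filter.tendsto_neg_atBot_iff.mpr (Filter.Tendsto.const_mul_atTop hb Filter.tendsto_id)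
    have h2 := (Real.tendsto_exp_atBot.comp h1).neg.div_const b
    simpa using h2

private lemma aux_meas_incr (m : ℕ) :
    MeasurableSet {y : Fin m → ℝ | ∀ i j, i < j → y i < y j} := by
  have h : {y : Fin m → ℝ | ∀ i j, i < j → y i < y j}
      = ⋂ i, ⋂ j, {y : Fin m → ℝ | i < j → y i < y j} := by
    ext y; simp [Set.mem_iInter]
  rw [h]
  refine MeasurableSet.iInter fun i => MeasurableSet.iInter fun j => ?_
  by_cases h : i < j
  · simp only [h, forall_true_left]
    exact measurableSet_lt (measurable_pi_apply i) (measurable_pi_apply j)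
  · simp only [h]; simp

private lemma aux_meas_pi (m : ℕ) (t : ℝ) :
    MeasurableSet {y : Fin m → ℝ | (∀ i j, i < j → y i < y j) ∧ ∀ i, t < y i} := by
  have h2 : MeasurableSet {y : Fin m → ℝ | ∀ i, t < y i} := by
    have h : {y : Fin m → ℝ | ∀ i, t < y i} = ⋂ i, {y : Fin m → ℝ | t < y i} := by
      ext y; simp [Set.mem_iInter]
    rw [h]
    exact MeasurableSet.iInter fun i =>
      measurableSet_lt measurable_const (measurable_pi_apply i)
  exact (aux_meas_incr m).inter h2

private lemma aux_meas_prod (m : ℕ) (t : ℝ) :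
    MeasurableSet {p : ℝ × (Fin m → ℝ) |
      t < p.1 ∧ ((∀ i j, i < j → p.2 i < p.2 j) ∧ ∀ i, p.1 < p.2 i)} := by
  have ha : MeasurableSet {p : ℝ × (Fin m → ℝ) | t < p.1} :=
    measurableSet_lt measurable_const measurable_fst
  have hb : MeasurableSet {p : ℝ × (Fin m → ℝ) | ∀ i j, i < j → p.2 i < p.2 j} := by
    have h : {p : ℝ × (Fin m → ℝ) | ∀ i j, i < j → p.2 i < p.2 j}
        = ⋂ i, ⋂ j, {p : ℝ × (Fin m → ℝ) | i < j → p.2 i < p.2 j} := by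
      ext p; simp [Set.mem_iInter]
    rw [h]
    refine MeasurableSet.iInter fun i => MeasurableSet.iInter fun j => ?_
    by_cases h : i < j
    · simp only [h, forall_true_left]
      exact measurableSet_lt (by fun_prop) (by fun_prop)
    · simp only [h]; simp
  have hc : MeasurableSet {p : ℝ × (Fin m → ℝ) | ∀ i, p.1 < p.2 i} := by
    have h : {p : ℝ × (Fin m → ℝ) | ∀ i, p.1 < p.2 i}
        = ⋂ i, {p : ℝ × (Fin m → ℝ) | p.1 < p.2 i} := by
      ext p; simp [Set.mem_iInter]
    rw [h]
    exact MeasurableSet.iInter fun i => measurableSet_lt (by fun_prop) (by fun_prop)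
  exact ha.inter (hb.inter hc)

private lemma aux_Ici_succ (m : ℕ) (k : Fin m) (w : Fin (m + 1) → ℝ) :
    ∑ j ∈ Finset.Ici k.succ, w j = ∑ j ∈ Finset.Ici k, w j.succ := by
  rw [show Finset.Ici k.succ = (Finset.Ici k).map ⟨Fin.succ, Fin.succ_injective m⟩ from ?_,
    Finset.sum_map]
  · rfl
  ext j
  simp only [Finset.mem_map, Finset.mem_Ici, Function.Embedding.coeFn_mk]
  constructor
  · intro hj
    rcases Fin.eq_succ_of_ne_zero (Fin.pos_iff_ne_zero.mp (lt_of_lt_of_le k.succ_pos hj)) with ⟨i, rfl⟩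
    exact ⟨i, Fin.succ_le_succ_iff.mp hj, rfl⟩
  · rintro ⟨i, hi, rfl⟩
    exact Fin.succ_le_succ_iff.mpr hi

private lemma aux_sum_Ici_pos {m : ℕ} (w : Fin m → ℝ) (hw : ∀ k, 0 < w k) (k : Fin m) :
    0 < ∑ j ∈ Finset.Ici k, w j :=
  Finset.sum_pos (fun j _ => hw j) ⟨k, Finset.mem_Ici.mpr le_rfl⟩

private lemma aux_prod_nonneg {m : ℕ} (w : Fin m → ℝ) (hw : ∀ k, 0 < w k) :
    0 ≤ ∏ k, w k / ∑ j ∈ Finset.Ici k, w j :=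
  Finset.prod_nonneg fun k _ => div_nonneg (hw k).le (aux_sum_Ici_pos w hw k).le

private lemma aux_key : ∀ (m : ℕ) (w : Fin m → ℝ), (∀ k, 0 < w k) → ∀ t : ℝ, 0 ≤ t →
    Measure.pi (fun k => expMeasure (w k))
        {y | (∀ i j, i < j → y i < y j) ∧ ∀ i, t < y i}
      = ENNReal.ofReal
          (Real.exp (-(∑ k, w k) * t) * ∏ k, w k / ∑ j ∈ Finset.Ici k, w j) := by
  intro m
  induction m with
  | zero =>
    intro w hw t ht
    haveI : ∀ k : Fin 0, IsProbabilityMeasure (expMeasure (w k)) :=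
      fun k => isProbabilityMeasure_expMeasure (hw k)
    have huniv : {y : Fin 0 → ℝ | (∀ i j, i < j → y i < y j) ∧ ∀ i, t < y i} = Set.univ :=
      Set.eq_univ_of_forall fun y => ⟨fun i => i.elim0, fun i => i.elim0⟩
    simp [huniv]
  | succ m ih =>
    intro w hw t ht
    haveI : ∀ k : Fin (m + 1), IsProbabilityMeasure (expMeasure (w k)) :=
      fun k => isProbabilityMeasure_expMeasure (hw k)
    set w' : Fin m → ℝ := fun j => w j.succ with hw'def
    have hw' : ∀ k, 0 < w' k := fun k => hw k.succ
    haveI : ∀ k : Fin m, IsProbabilityMeasure (expMeasure (w' k)) :=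
      fun k => isProbabilityMeasure_expMeasure (hw' k)
    set S' : ℝ := ∑ j, w' j with hS'
    set C' : ℝ := ∏ k, w' k / ∑ j ∈ Finset.Ici k, w' j with hC'
    have hC'0 : 0 ≤ C' := aux_prod_nonneg w' hw'
    set S : ℝ := ∑ k, w k with hS
    have hSsplit : S = w 0 + S' := by
      rw [hS, hS', Fin.sum_univ_succ]
    have hSpos : 0 < S := by
      rw [hSsplit]
      have : 0 ≤ S' := Finset.sum_nonneg fun j _ => (hw' j).le
      linarith [hw 0]
    -- measure-preserving splitting of the first coordinate
    have hmp := measurePreserving_piFinSuccAbove (fun k => expMeasure (w k)) 0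
    set e := MeasurableEquiv.piFinSuccAbove (fun _ : Fin (m + 1) => ℝ) 0 with he
    set B : Set (ℝ × (Fin m → ℝ)) :=
      {p | t < p.1 ∧ ((∀ i j, i < j → p.2 i < p.2 j) ∧ ∀ i, p.1 < p.2 i)} with hB
    have hBmeas : MeasurableSet B := aux_meas_prod m t
    have hpre : {y : Fin (m + 1) → ℝ | (∀ i j, i < j → y i < y j) ∧ ∀ i, t < y i}
        = ⇑e ⁻¹' B := by
      ext x
      have hex : e x = (x 0, fun j => x j.succ) := by
        simp [he, MeasurableEquiv.piFinSuccAbove, Fin.insertNthEquiv]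
        rfl
      simp only [Set.mem_preimage, hex, hB, Set.mem_setOf_eq]
      constructor
      · rintro ⟨hinc, hgt⟩
        exact ⟨hgt 0, fun i j hij => hinc i.succ j.succ (Fin.succ_lt_succ_iff.mpr hij),
          fun i => hinc 0 i.succ i.succ_pos⟩
      · rintro ⟨ht0, hinc, h0lt⟩
        refine ⟨fun i j hij => ?_, fun i => ?_⟩
        · rcases Fin.eq_zero_or_eq_succ j with rfl | ⟨j', rfl⟩
          · exact absurd hij (Fin.not_lt_zero i)
          rcases Fin.eq_zero_or_eq_succ i with rfl | ⟨i', rfl⟩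
          · exact h0lt j'
          · exact hinc i' j' (Fin.succ_lt_succ_iff.mp hij)
        · rcases Fin.eq_zero_or_eq_succ i with rfl | ⟨j', rfl⟩
          · exact ht0
          · exact ht0.trans (h0lt j')
    rw [hpre, hmp.measure_preimage hBmeas.nullMeasurableSet]
    -- rewrite the tail measure
    have htail : (Measure.pi fun j : Fin m => expMeasure (w ((0 : Fin (m+1)).succAbove j)))
        = Measure.pi fun j : Fin m => expMeasure (w' j) := by
      simp [Fin.succAbove_zero, hw'def]
    rw [htail, Measure.prod_apply hBmeas]
    have hsec : ∀ s : ℝ, (Measure.pi fun j : Fin m => expMeasure (w' j)) (Prod.mk s ⁻¹' B)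
        = (Set.Ioi t).indicator
            (fun s => (Measure.pi fun j : Fin m => expMeasure (w' j))
              {y | (∀ i j, i < j → y i < y j) ∧ ∀ i, s < y i}) s := by
      intro s
      by_cases hs : t < s
      · rw [Set.indicator_of_mem (Set.mem_Ioi.mpr hs)]
        congr 1
        ext y
        simp [hB, hs]
      · rw [Set.indicator_of_notMem (by simpa using hs)]
        have : (Prod.mk s ⁻¹' B) = ∅ := by
          ext y; simp [hB, hs]
        simp [this]
    rw [lintegral_congr hsec, lintegral_indicator measurableSet_Ioi]
    have hIH : ∫⁻ s in Set.Ioi t,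
        (Measure.pi fun j : Fin m => expMeasure (w' j))
          {y | (∀ i j, i < j → y i < y j) ∧ ∀ i, s < y i} ∂(expMeasure (w 0))
        = ∫⁻ s in Set.Ioi t, ENNReal.ofReal (Real.exp (-S' * s) * C') ∂(expMeasure (w 0)) := by
      refine setLIntegral_congr_fun measurableSet_Ioi ?_
      intro s hs
      exact ih w' hw' s (ht.trans (le_of_lt hs))
    rw [hIH]
    -- unfold the exponential measure
    have hexp : expMeasure (w 0) = volume.withDensity (exponentialPDF (w 0)) := rfl
    rw [hexp, setLIntegral_withDensity_eq_setLIntegral_mul volume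
      (f := exponentialPDF (w 0)) (g := fun s => ENNReal.ofReal (Real.exp (-S' * s) * C'))
      ((measurable_exponentialPDFReal (w 0)).ennreal_ofReal) (by fun_prop) measurableSet_Ioi]
    have hptwise : ∫⁻ s in Set.Ioi t,
          (exponentialPDF (w 0) * fun s => ENNReal.ofReal (Real.exp (-S' * s) * C')) s
        = ∫⁻ s in Set.Ioi t, ENNReal.ofReal (w 0 * Real.exp (-(S * s)) * C') := by
      refine setLIntegral_congr_fun measurableSet_Ioi ?_
      intro s hs
      have hs0 : (0:ℝ) ≤ s := ht.trans (le_of_lt hs)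
      simp only [Pi.mul_apply, exponentialPDF_of_nonneg hs0]
      rw [← ENNReal.ofReal_mul (mul_nonneg (hw 0).le (Real.exp_nonneg _))]
      congr 1
      rw [hSsplit, show -((w 0 + S') * s) = -(w 0 * s) + -S' * s by ring, Real.exp_add]
      ring
    rw [hptwise]
    rw [← ofReal_integral_eq_lintegral_ofReal]
    · have : ∫ s in Set.Ioi t, w 0 * Real.exp (-(S * s)) * C'
          = w 0 * (Real.exp (-(S * t)) / S) * C' := by
        rw [MeasureTheory.integral_mul_const, MeasureTheory.integral_const_mul,
          aux_integral_exp hSpos t]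
      rw [this]
      congr 1
      have hIci0 : ∑ j ∈ Finset.Ici (0 : Fin (m + 1)), w j = S := by
        rw [hS]
        congr 1
        ext j; simp [Fin.zero_le]
      rw [Fin.prod_univ_succ, hIci0]
      have : ∀ k : Fin m, w k.succ / ∑ j ∈ Finset.Ici k.succ, w j
          = w' k / ∑ j ∈ Finset.Ici k, w' j := by
        intro k
        rw [aux_Ici_succ m k w]
      rw [Finset.prod_congr rfl fun k _ => this k, ← hC']
      rw [neg_mul]
      field_simp
    · refine Integrable.mul_const (Integrable.const_mul ?_ _) _
      simpa [neg_mul, IntegrableOn] using exp_neg_integrableOn_Ioi t hSpos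
    · exact Filter.Eventually.of_forall fun s =>
        mul_nonneg (mul_nonneg (hw 0).le (Real.exp_nonneg _)) hC'0

private lemma aux_map_pi (n : ℕ) {Ω : Type*} [MeasurableSpace Ω]
    (μ : Measure Ω) [IsProbabilityMeasure μ]
    (X : Fin n → Ω → ℝ) (hX : ∀ k, Measurable (X k))
    (w : Fin n → ℝ) (hw : ∀ k, 0 < w k)
    (hind : iIndepFun X μ)
    (hdist : ∀ k, μ.map (X k) = expMeasure (w k)) :
    Measure.pi (fun k => expMeasure (w k)) = μ.map (fun ω i => X i ω) := by
  haveI : ∀ k : Fin n, IsProbabilityMeasure (expMeasure (w k)) :=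
    fun k => isProbabilityMeasure_expMeasure (hw k)
  haveI : ∀ k : Fin n, SigmaFinite (expMeasure (w k)) := fun k => inferInstance
  have hmeas : Measurable (fun ω (i : Fin n) => X i ω) :=
    measurable_pi_iff.mpr fun i => hX i
  refine Measure.pi_eq fun s hs => ?_
  rw [Measure.map_apply hmeas (MeasurableSet.univ_pi hs)]
  have : (fun ω (i : Fin n) => X i ω) ⁻¹' Set.pi Set.univ s
      = ⋂ i ∈ (Finset.univ : Finset (Fin n)), X i ⁻¹' s i := by
    ext ω; simp [Set.mem_pi]
  rw [this, (iIndepFun_iff_measure_inter_preimage_eq_mul.mp hind)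
    Finset.univ (fun i _ => hs i)]
  refine Finset.prod_congr rfl fun i _ => ?_
  rw [← Measure.map_apply (hX i) (hs i), hdist i]

theorem exp_ranking_probability (n : ℕ) (Ω : Type*) [MeasurableSpace Ω]
    (μ : Measure Ω) [IsProbabilityMeasure μ]
    (X : Fin n → Ω → ℝ) (hX : ∀ k, Measurable (X k))
    (w : Fin n → ℝ) (hw : ∀ k, 0 < w k)
    (hind : iIndepFun X μ)
    (hdist : ∀ k, μ.map (X k) = expMeasure (w k)) :
    (μ {ω | ∀ i j : Fin n, i < j → X i ω < X j ω}).toReal =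
      ∏ k : Fin n, w k / ∑ j ∈ Finset.Ici k, w j := by
  haveI : ∀ k : Fin n, IsProbabilityMeasure (expMeasure (w k)) :=
    fun k => isProbabilityMeasure_expMeasure (hw k)
  have hmeas : Measurable (fun ω (i : Fin n) => X i ω) :=
    measurable_pi_iff.mpr fun i => hX i
  have hmap := aux_map_pi n μ X hX w hw hind hdist
  have h1 : μ {ω | ∀ i j : Fin n, i < j → X i ω < X j ω}
      = (Measure.pi fun k => expMeasure (w k)) {y : Fin n → ℝ | ∀ i j, i < j → y i < y j} := by
    rw [hmap, Measure.map_apply hmeas (aux_meas_incr n)]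
    rfl
  have hsub : {y : Fin n → ℝ | (∀ i j, i < j → y i < y j) ∧ ∀ i, (0:ℝ) < y i}
      ⊆ {y : Fin n → ℝ | ∀ i j, i < j → y i < y j} := fun y hy => hy.1
  have hdiff : (Measure.pi fun k => expMeasure (w k))
      ({y : Fin n → ℝ | ∀ i j, i < j → y i < y j}
        \ {y : Fin n → ℝ | (∀ i j, i < j → y i < y j) ∧ ∀ i, (0:ℝ) < y i}) = 0 := by
    have hsubset : {y : Fin n → ℝ | ∀ i j, i < j → y i < y j}
          \ {y : Fin n → ℝ | (∀ i j, i < j → y i < y j) ∧ ∀ i, (0:ℝ) < y i}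
        ⊆ ⋃ i, Function.eval i ⁻¹' (Set.Iic (0:ℝ)) := by
      intro y hy
      simp only [Set.mem_diff, Set.mem_setOf_eq, not_and, not_forall, not_lt] at hy
      obtain ⟨i, hi⟩ := hy.2 hy.1
      exact Set.mem_iUnion.mpr ⟨i, hi⟩
    refine measure_mono_null hsubset (measure_iUnion_null fun i => ?_)
    refine Measure.pi_eval_preimage_null _ ?_
    have h0 : expMeasure (w i) (Set.Iic (0:ℝ))
        = ∫⁻ x in Set.Iio (0:ℝ), exponentialPDF (w i) x := by
      rw [show expMeasure (w i) = volume.withDensity (exponentialPDF (w i)) from rfl,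
        withDensity_apply _ measurableSet_Iic]
      exact setLIntegral_congr Iio_ae_eq_Iic.symm
    rw [h0, lintegral_exponentialPDF_of_nonpos le_rfl]
  have h2 : (Measure.pi fun k => expMeasure (w k)) {y : Fin n → ℝ | ∀ i j, i < j → y i < y j}
      = (Measure.pi fun k => expMeasure (w k))
          {y : Fin n → ℝ | (∀ i j, i < j → y i < y j) ∧ ∀ i, (0:ℝ) < y i} := by
    refine measure_congr (MeasureTheory.ae_eq_set.mpr ⟨hdiff, ?_⟩)
    rw [Set.diff_eq_empty.mpr hsub]
    simp
  have h3 := aux_key n w hw 0 le_rfl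
  rw [h1, h2, h3, mul_zero, Real.exp_zero, one_mul,
    ENNReal.toReal_ofReal (aux_prod_nonneg w hw)]
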